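/- Suppose Δ is an independent set in the skeleton of the confidence rule (i.e., p_{σ→σ'} = p_{σ'→σ} = 0 for all σ, σ' ∈ Δ). Then every point of the face M_Δ = {η in the simplex : ∑_{σ∈Δ} η_σ = 1} is a fixed point of the mean-field Sznajd dynamics. -/
import Mathlib


/-- if `Δ` is an independent set of the skeleton of the confidence rule
(`p σ σ' = 0` for all `σ, σ' ∈ Δ`), then every point of the face `M_Δ` of the simplex
is a fixed point of the mean-field Sznajd dynamics. -/
theorem stmt18 {M : ℕ} (hM : 1 ≤ M) (q : ℕ) (hq : 2 ≤ q) (r : ℝ) (hr : 0 < r)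
    (p : Fin M → Fin M → ℝ) (hp : ∀ σ σ', 0 ≤ p σ σ')
    (Δ : Finset (Fin M))
    (hind : ∀ σ ∈ Δ, ∀ σ' ∈ Δ, p σ σ' = 0)
    (η : Fin M → ℝ) (hpos : ∀ σ, 0 ≤ η σ) (hsum : ∑ σ, η σ = 1)
    (hsupp : ∑ σ ∈ Δ, η σ = 1) :
    ∀ σ, r * ∑ σ', η σ * η σ' *
      (η σ ^ (q - 1) * p σ' σ - η σ' ^ (q - 1) * p σ σ') = 0 := by
  have hzero : ∀ τ, τ ∉ Δ → η τ = 0 := by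
    intro τ hτ
    have hsplit : ∑ σ ∈ Δ, η σ + ∑ σ ∈ Δᶜ, η σ = 1 := by
      rw [Finset.sum_add_sum_compl]; exact hsum
    have hc : ∑ σ ∈ Δᶜ, η σ = 0 := by linarith
    have := (Finset.sum_eq_zero_iff_of_nonneg (fun i _ => hpos i)).mp hc
    exact this τ (Finset.mem_compl.mpr hτ)
  intro σ
  have : ∀ σ', η σ * η σ' *
      (η σ ^ (q - 1) * p σ' σ - η σ' ^ (q - 1) * p σ σ') = 0 := by
    intro σ'
    by_cases hσ : σ ∈ Δ
    · by_cases hσ' : σ' ∈ Δ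
      · rw [hind σ' hσ' σ hσ, hind σ hσ σ' hσ']; ring
      · rw [hzero σ' hσ']; ring
    · rw [hzero σ hσ]; ring
  rw [Finset.sum_congr rfl (fun σ' _ => this σ'), Finset.sum_const_zero, mul_zero]
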